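/- arXiv:2106.08659 — 3 statements merged into one kernel-verified Lean document; each statement's English description precedes it below -/
import Mathlib

section
/- Let σ_x and σ_z be the Pauli matrices and e₁ = (1,1)/√2, e₂ = (1,-1)/√2 the eigenvectors of σ_x. Then for any n ∈ ℕ and t₁,…,t_n ≥ 0: ⟨e₁, σ_z e^{t₁σ_x} σ_z e^{t₂σ_x} ⋯ e^{t_nσ_x} σ_z e₁⟩ = 0 if n is even and equals exp(∑_{j=1}^n (-1)^j t_j) if n is odd. -/
open Matrix

noncomputable section

def sigmaX : Matrix (Fin 2) (Fin 2) ℝ := !![0, 1; 1, 0]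
def sigmaZ : Matrix (Fin 2) (Fin 2) ℝ := !![1, 0; 0, -1]

/-- `e₁ = (1,1)/√2`, the `+1`-eigenvector of `σ_x`. -/
def eVec₁ : Fin 2 → ℝ := ![1 / Real.sqrt 2, 1 / Real.sqrt 2]

def eVec₂ : Fin 2 → ℝ := ![1 / Real.sqrt 2, -(1 / Real.sqrt 2)]

section

attribute [local instance] Matrix.linftyOpNormedRing Matrix.linftyOpNormedAlgebra

lemma exp_mulVec (A : Matrix (Fin 2) (Fin 2) ℝ) (v : Fin 2 → ℝ) (c : ℝ)
    (h : A *ᵥ v = c • v) :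
    NormedSpace.exp A *ᵥ v = Real.exp c • v := by
  have hpow : ∀ k : ℕ, (A ^ k) *ᵥ v = (c ^ k) • v := by
    intro k; induction k with
    | zero => simp
    | succ k ih =>
      rw [pow_succ', ← Matrix.mulVec_mulVec, ih, Matrix.mulVec_smul, h, smul_smul, pow_succ]
  let L : Matrix (Fin 2) (Fin 2) ℝ →ₗ[ℝ] (Fin 2 → ℝ) :=
    { toFun := fun M => M *ᵥ v
      map_add' := fun M N => Matrix.add_mulVec M N v
      map_smul' := fun r M => Matrix.smul_mulVec r M v }
  let L' := L.toContinuousLinearMap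
  have hsum : Summable (fun k : ℕ => ((k.factorial : ℝ)⁻¹) • A ^ k) :=
    NormedSpace.expSeries_summable' A
  have hsum2 : Summable (fun k : ℕ => c ^ k / (k.factorial : ℝ)) :=
    Real.summable_pow_div_factorial c
  have key : NormedSpace.exp A *ᵥ v = L' (∑' k : ℕ, ((k.factorial : ℝ)⁻¹) • A ^ k) := by
    rw [NormedSpace.exp_eq_tsum ℝ]; rfl
  rw [key, L'.map_tsum hsum]
  have h1 : ∀ k : ℕ, L' (((k.factorial : ℝ)⁻¹) • A ^ k) = (c ^ k / (k.factorial : ℝ)) • v := by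
    intro k
    have : L' (((k.factorial : ℝ)⁻¹) • A ^ k) = ((k.factorial : ℝ)⁻¹) • ((A ^ k) *ᵥ v) := by
      simp [L', L, Matrix.smul_mulVec]
    rw [this, hpow, smul_smul, div_eq_inv_mul]
  rw [tsum_congr h1, hsum2.tsum_smul_const]
  congr 1
  rw [Real.exp_eq_exp_ℝ, NormedSpace.exp_eq_tsum_div]

end

lemma sigmaX_e1 : sigmaX *ᵥ eVec₁ = eVec₁ := by
  funext i; fin_cases i <;>
    simp [sigmaX, eVec₁, Matrix.mulVec, dotProduct, Fin.sum_univ_two]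

lemma sigmaX_e2 : sigmaX *ᵥ eVec₂ = (-1 : ℝ) • eVec₂ := by
  funext i; fin_cases i <;>
    simp [sigmaX, eVec₂, Matrix.mulVec, dotProduct, Fin.sum_univ_two]

lemma sigmaZ_e1 : sigmaZ *ᵥ eVec₁ = eVec₂ := by
  funext i; fin_cases i <;>
    simp [sigmaZ, eVec₁, eVec₂, Matrix.mulVec, dotProduct, Fin.sum_univ_two]

lemma sigmaZ_e2 : sigmaZ *ᵥ eVec₂ = eVec₁ := by
  funext i; fin_cases i <;>
    simp [sigmaZ, eVec₁, eVec₂, Matrix.mulVec, dotProduct, Fin.sum_univ_two]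

lemma expX_e1 (s : ℝ) : NormedSpace.exp (s • sigmaX) *ᵥ eVec₁ = Real.exp s • eVec₁ := by
  rw [exp_mulVec _ _ s]
  rw [Matrix.smul_mulVec, sigmaX_e1]

lemma expX_e2 (s : ℝ) : NormedSpace.exp (s • sigmaX) *ᵥ eVec₂ = Real.exp (-s) • eVec₂ := by
  rw [exp_mulVec _ _ (-s)]
  rw [Matrix.smul_mulVec, sigmaX_e2, smul_smul]
  simp

lemma dot_e1_e1 : eVec₁ ⬝ᵥ eVec₁ = 1 := by
  have h2 : Real.sqrt 2 * Real.sqrt 2 = 2 := Real.mul_self_sqrt (by norm_num)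
  have h0 : Real.sqrt 2 ≠ 0 := by positivity
  simp only [dotProduct, Fin.sum_univ_two, eVec₁, Matrix.cons_val_zero,
    Matrix.cons_val_one, Matrix.head_cons]
  field_simp
  rw [sq, h2]; norm_num

lemma dot_e1_e2 : eVec₁ ⬝ᵥ eVec₂ = 0 := by
  simp [dotProduct, Fin.sum_univ_two, eVec₁, eVec₂]

/-- The alternating product `σ_z e^{t₁ σ_x} σ_z e^{t₂ σ_x} ⋯ e^{t_n σ_x} σ_z`. -/
def spinProd (n : ℕ) (t : Fin n → ℝ) : Matrix (Fin 2) (Fin 2) ℝ :=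
  sigmaZ * (List.ofFn (fun j : Fin n =>
    NormedSpace.exp (t j • sigmaX) * sigmaZ)).prod

/-- key product lemma -/
lemma prod_mulVec (n : ℕ) (t : Fin n → ℝ) :
    (List.ofFn (fun j : Fin n =>
      NormedSpace.exp (t j • sigmaX) * sigmaZ)).prod *ᵥ eVec₁
    = Real.exp (∑ j : Fin n, (-1 : ℝ) ^ (n + (j : ℕ)) * t j) •
        (if Even n then eVec₁ else eVec₂) := by
  induction n with
  | zero => simp
  | succ n ih =>
    rw [List.ofFn_succ, List.prod_cons, ← Matrix.mulVec_mulVec, ih (fun j => t j.succ),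
      Fin.sum_univ_succ]
    have hshift : ∀ j : Fin n, (-1 : ℝ) ^ (n + 1 + ((j.succ : Fin (n+1)) : ℕ)) * t j.succ
        = (-1 : ℝ) ^ (n + (j : ℕ)) * t j.succ := by
      intro j
      congr 1
      have : n + 1 + ((j.succ : Fin (n+1)) : ℕ) = (n + (j : ℕ)) + 2 := by
        simp [Fin.val_succ]; ring
      rw [this, pow_add]
      norm_num
    rw [Finset.sum_congr rfl (fun j _ => hshift j)]
    rcases Nat.even_or_odd n with hn | hn
    · rw [if_pos hn, if_neg (by simp [Nat.even_add_one]; exact hn)]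
      rw [Matrix.mulVec_smul, ← Matrix.mulVec_mulVec, sigmaZ_e1, expX_e2, smul_smul,
        ← Real.exp_add]
      congr 2
      have hpow : (-1 : ℝ) ^ (n + 1 + ((0 : Fin (n+1)) : ℕ)) = -1 := by
        simp [pow_succ, hn.neg_one_pow]
      rw [hpow]
      ring
    · rw [if_neg (by simpa using hn), if_pos hn.add_one]
      rw [Matrix.mulVec_smul, ← Matrix.mulVec_mulVec, sigmaZ_e2, expX_e1, smul_smul,
        ← Real.exp_add]
      congr 2
      have hpow : (-1 : ℝ) ^ (n + 1 + ((0 : Fin (n+1)) : ℕ)) = 1 := by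
        simp [pow_succ, hn.neg_one_pow]
      rw [hpow]
      ring

/-- `⟨e₁, σ_z e^{t₁σ_x} σ_z e^{t₂σ_x} ⋯ e^{t_nσ_x} σ_z e₁⟩ = 0` if `n` is even and
`= exp(∑_{j=1}^n (-1)^j t_j)` if `n` is odd (with `t j` corresponding to `t_{j+1}`). -/
theorem spin_matrix_element_e1_e1 (n : ℕ) (t : Fin n → ℝ) (ht : ∀ j, 0 ≤ t j) :
    eVec₁ ⬝ᵥ (spinProd n t *ᵥ eVec₁)
      = if Even n then 0
        else Real.exp (∑ j : Fin n, (-1 : ℝ) ^ ((j : ℕ) + 1) * t j) := by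
  rw [spinProd, ← Matrix.mulVec_mulVec, prod_mulVec]
  rcases Nat.even_or_odd n with hn | hn
  · rw [if_pos hn, if_pos hn, Matrix.mulVec_smul, sigmaZ_e1, dotProduct_smul,
      dot_e1_e2]
    simp
  · rw [if_neg (by simpa using hn), if_neg (by simpa using hn), Matrix.mulVec_smul,
      sigmaZ_e2, dotProduct_smul, dot_e1_e1]
    simp only [smul_eq_mul, mul_one]
    congr 1
    refine Finset.sum_congr rfl fun j _ => ?_
    congr 1
    rcases hn with ⟨m, hm⟩
    subst hm
    have : 2 * m + 1 + (j : ℕ) = 2 * m + ((j:ℕ) + 1) := by ring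
    rw [this, pow_add]
    simp [pow_mul]

end
end

section
/- For any t ∈ ℝ, the map j_t f(k,s) = (e^{-i t s}/√π) ω(k)^{1/2} f(k) defines an isometry from L²(ℝ^d) into the weighted space E = L²(ℝ^{d+1}, (ω(k)²+s²)^{-1} d(k,s)). -/
open MeasureTheory

lemma cauchy_lintegral (a : ℝ) (ha : 0 < a) :
    ∫⁻ s : ℝ, ENNReal.ofReal (a / (a ^ 2 + s ^ 2)) = ENNReal.ofReal Real.pi := by
  have heq : ∀ s : ℝ, a / (a ^ 2 + s ^ 2) = a⁻¹ * (1 + (s / a) ^ 2)⁻¹ := by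
    intro s
    have h1 : a ^ 2 + s ^ 2 ≠ 0 := by positivity
    field_simp
  have hint : Integrable (fun s : ℝ => a⁻¹ * (1 + (s / a) ^ 2)⁻¹) :=
    (integrable_inv_one_add_sq.comp_div ha.ne').const_mul _
  have hnn : 0 ≤ᵐ[volume] fun s : ℝ => a⁻¹ * (1 + (s / a) ^ 2)⁻¹ := by
    filter_upwards with s
    positivity
  calc ∫⁻ s : ℝ, ENNReal.ofReal (a / (a ^ 2 + s ^ 2))
      = ∫⁻ s : ℝ, ENNReal.ofReal (a⁻¹ * (1 + (s / a) ^ 2)⁻¹) := by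
        simp_rw [heq]
    _ = ENNReal.ofReal (∫ s : ℝ, a⁻¹ * (1 + (s / a) ^ 2)⁻¹) :=
        (ofReal_integral_eq_lintegral_ofReal hint hnn).symm
    _ = ENNReal.ofReal Real.pi := by
        rw [integral_const_mul, MeasureTheory.Measure.integral_comp_div
          (fun y : ℝ => (1 + y ^ 2)⁻¹) a, integral_univ_inv_one_add_sq,
          abs_of_pos ha, smul_eq_mul]
        rw [← mul_assoc, inv_mul_cancel₀ ha.ne', one_mul]

/-- For any `t ∈ ℝ`, the map `j_t f (k,s) = (e^{-i t s}/√π) ω(k)^{1/2} f(k)` is an isometry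
from `L²(ℝ^d)` into the weighted space `E = L²(ℝ^{d+1}, (ω(k)² + s²)⁻¹ d(k,s))`:
the weighted squared norm of `j_t f` equals the squared norm of `f`. -/
theorem jt_isometry (d : ℕ) (ω : (Fin d → ℝ) → ℝ) (hω_meas : Measurable ω)
    (hω_pos : ∀ᵐ k : Fin d → ℝ, 0 < ω k) (t : ℝ)
    (f : (Fin d → ℝ) → ℂ) (hf : Measurable f) :
    ∫⁻ p : (Fin d → ℝ) × ℝ,
        ENNReal.ofReal
          (‖(Complex.exp (-(Complex.I * t * p.2)) / (Real.sqrt Real.pi : ℂ))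
              * (Real.sqrt (ω p.1) : ℂ) * f p.1‖ ^ 2 / ((ω p.1) ^ 2 + p.2 ^ 2))
      = ∫⁻ k : Fin d → ℝ, ENNReal.ofReal (‖f k‖ ^ 2) := by
  have hπ : 0 < Real.pi := Real.pi_pos
  -- pointwise simplification of the norm
  have hnorm : ∀ (k : Fin d → ℝ) (s : ℝ), 0 ≤ ω k →
      ‖(Complex.exp (-(Complex.I * t * s)) / (Real.sqrt Real.pi : ℂ))
          * (Real.sqrt (ω k) : ℂ) * f k‖ ^ 2 / ((ω k) ^ 2 + s ^ 2)
        = (‖f k‖ ^ 2 / Real.pi) * (ω k / ((ω k) ^ 2 + s ^ 2)) := by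
    intro k s hk
    have hexp : ‖Complex.exp (-(Complex.I * t * s))‖ = 1 := by
      rw [Complex.norm_exp]
      simp
    rw [norm_mul, norm_mul, norm_div, hexp, Complex.norm_real, Complex.norm_real,
      Real.norm_eq_abs, Real.norm_eq_abs, abs_of_nonneg (Real.sqrt_nonneg _),
      abs_of_nonneg (Real.sqrt_nonneg _)]
    rw [mul_pow, mul_pow, div_pow, one_pow, Real.sq_sqrt hπ.le, Real.sq_sqrt hk]
    ring
  have hmeas : Measurable fun p : (Fin d → ℝ) × ℝ =>
      ENNReal.ofReal
        (‖(Complex.exp (-(Complex.I * t * p.2)) / (Real.sqrt Real.pi : ℂ))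
            * (Real.sqrt (ω p.1) : ℂ) * f p.1‖ ^ 2 / ((ω p.1) ^ 2 + p.2 ^ 2)) := by
    apply ENNReal.measurable_ofReal.comp
    apply Measurable.div
    · apply Measurable.pow_const
      apply Measurable.norm
      apply Measurable.mul
      · apply Measurable.mul
        · exact (Complex.measurable_exp.comp
            ((measurable_const.mul (Complex.measurable_ofReal.comp measurable_snd)).neg)).div
            measurable_const
        · exact Complex.measurable_ofReal.comp
            ((hω_meas.comp measurable_fst).sqrt)
      · exact hf.comp measurable_fst
    · exact ((hω_meas.comp measurable_fst).pow_const 2).add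
        (measurable_snd.pow_const 2)
  rw [Measure.volume_eq_prod, lintegral_prod _ hmeas.aemeasurable]
  refine lintegral_congr_ae ?_
  filter_upwards [hω_pos] with k hk
  calc ∫⁻ s : ℝ, ENNReal.ofReal
        (‖(Complex.exp (-(Complex.I * t * s)) / (Real.sqrt Real.pi : ℂ))
            * (Real.sqrt (ω k) : ℂ) * f k‖ ^ 2 / ((ω k) ^ 2 + s ^ 2))
      = ∫⁻ s : ℝ, ENNReal.ofReal ((‖f k‖ ^ 2 / Real.pi) * (ω k / ((ω k) ^ 2 + s ^ 2))) := by
        refine lintegral_congr fun s => ?_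
        rw [hnorm k s hk.le]
    _ = ∫⁻ s : ℝ, ENNReal.ofReal (‖f k‖ ^ 2 / Real.pi)
          * ENNReal.ofReal (ω k / ((ω k) ^ 2 + s ^ 2)) := by
        refine lintegral_congr fun s => ?_
        rw [ENNReal.ofReal_mul (by positivity)]
    _ = ENNReal.ofReal (‖f k‖ ^ 2 / Real.pi)
          * ∫⁻ s : ℝ, ENNReal.ofReal (ω k / ((ω k) ^ 2 + s ^ 2)) :=
        lintegral_const_mul' _ _ ENNReal.ofReal_ne_top
    _ = ENNReal.ofReal (‖f k‖ ^ 2 / Real.pi) * ENNReal.ofReal Real.pi := by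
        rw [cauchy_lintegral (ω k) hk]
    _ = ENNReal.ofReal (‖f k‖ ^ 2) := by
        rw [← ENNReal.ofReal_mul (by positivity), div_mul_cancel₀ _ hπ.ne']
end

section
/- Faà di Bruno formula via set partitions: if f and g are n-times continuously differentiable real functions (g mapping into the domain of f), then (f∘g)^{(n)} = ∑_{P ∈ 𝒫_n} (f^{(|P|)} ∘ g) · ∏_{B ∈ P} g^{(|B|)}, where 𝒫_n is the set of partitions of {1,…,n}. -/
open Finset Function

namespace FaaDiBrunoBridge

variable {n : ℕ}

/-- The `m`-th part of an ordered finpartition, as a `Finset`. -/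
def partc (c : OrderedFinpartition n) (m : Fin c.length) : Finset (Fin n) :=
  Finset.image (c.emb m) Finset.univ

lemma coe_partc (c : OrderedFinpartition n) (m : Fin c.length) :
    (partc c m : Set (Fin n)) = Set.range (c.emb m) := by
  simp [partc]

lemma partc_card (c : OrderedFinpartition n) (m : Fin c.length) :
    (partc c m).card = c.partSize m := by
  rw [partc, card_image_of_injective _ (c.emb_strictMono m).injective, card_univ,
    Fintype.card_fin]

lemma partc_nonempty (c : OrderedFinpartition n) (m : Fin c.length) :
    (partc c m).Nonempty := by
  rw [← card_pos, partc_card]; exact c.partSize_pos m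

lemma partc_injective (c : OrderedFinpartition n) : Injective (partc c) := by
  intro m m' h
  by_contra hne
  have hd : Disjoint (Set.range (c.emb m)) (Set.range (c.emb m')) :=
    c.disjoint (Set.mem_univ m) (Set.mem_univ m') hne
  obtain ⟨a, ha⟩ := partc_nonempty c m
  have ha' : a ∈ partc c m' := h ▸ ha
  rw [← Finset.mem_coe, coe_partc] at ha ha'
  exact Set.disjoint_iff_forall_ne.1 hd ha ha' rfl

lemma partc_max' (c : OrderedFinpartition n) (m : Fin c.length) :
    (partc c m).max' (partc_nonempty c m) =
      c.emb m ⟨c.partSize m - 1, Nat.sub_one_lt_of_lt (c.partSize_pos m)⟩ := by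
  apply le_antisymm
  · apply Finset.max'_le
    intro y hy
    simp only [partc, mem_image, mem_univ, true_and] at hy
    obtain ⟨r, rfl⟩ := hy
    exact (c.emb_strictMono m).monotone (by
      simpa [Fin.le_def] using Nat.le_sub_one_of_lt r.2)
  · exact Finset.le_max' _ _ (by simp [partc])

/-- The underlying `Finpartition` of an ordered finpartition. -/
def toFP (c : OrderedFinpartition n) : Finpartition (univ : Finset (Fin n)) where
  parts := Finset.image (partc c) univ
  supIndep := by
    rw [Finset.supIndep_iff_pairwiseDisjoint]
    intro B hB B' hB' hne
    simp only [Finset.coe_image, Set.mem_image, coe_univ, Set.image_univ, Set.mem_range] at hB hB'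
    obtain ⟨m, rfl⟩ := hB
    obtain ⟨m', rfl⟩ := hB'
    have hmm : m ≠ m' := fun h => hne (by rw [h])
    have h2 : Disjoint (Set.range (c.emb m)) (Set.range (c.emb m')) :=
      c.disjoint (Set.mem_univ m) (Set.mem_univ m') hmm
    show Disjoint (partc c m) (partc c m')
    rw [← Finset.disjoint_coe, coe_partc, coe_partc]
    exact h2
  sup_parts := by
    apply le_antisymm
    · exact Finset.sup_le fun B _ => le_top.trans_eq (by simp)
    · intro j _
      rw [Finset.mem_sup]
      obtain ⟨m, r, hr⟩ := c.cover j
      exact ⟨partc c m, mem_image_of_mem _ (mem_univ m), by simp [partc, ← hr]⟩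
  bot_notMem := by
    simp only [Finset.bot_eq_empty, mem_image, mem_univ, true_and, not_exists]
    intro m h
    exact (partc_nonempty c m).ne_empty h

lemma toFP_parts_card (c : OrderedFinpartition n) : (toFP c).parts.card = c.length := by
  rw [toFP, card_image_of_injective _ (partc_injective c), card_univ, Fintype.card_fin]

lemma toFP_prod (c : OrderedFinpartition n) (G : ℕ → ℝ) :
    ∏ B ∈ (toFP c).parts, G B.card = ∏ m, G (c.partSize m) := by
  rw [toFP]
  rw [Finset.prod_image (fun a _ b _ h => partc_injective c h)]
  exact Finset.prod_congr rfl fun m _ => by rw [partc_card]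

/-! ### Injectivity of `toFP` -/

lemma strictMono_eq_of_range_eq {l : ℕ} {β : Type*} [LinearOrder β] {φ ψ : Fin l → β}
    (hφ : StrictMono φ) (hψ : StrictMono ψ) (h : Set.range φ = Set.range ψ) : φ = ψ := by
  haveI : WellFoundedLT (Fin l) := inferInstance
  exact (StrictMono.range_inj hφ hψ).1 h

lemma partc_max (c : OrderedFinpartition n) (m : Fin c.length) :
    (partc c m).max =
      (c.emb m ⟨c.partSize m - 1, Nat.sub_one_lt_of_lt (c.partSize_pos m)⟩ : WithBot (Fin n)) := by
  rw [← Finset.coe_max' (partc_nonempty c m), partc_max']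

lemma strictMono_partc_max (c : OrderedFinpartition n) :
    StrictMono (fun m => (partc c m).max) := by
  intro a b hab
  show (partc c a).max < (partc c b).max
  rw [partc_max, partc_max]
  exact_mod_cast c.parts_strictMono hab

lemma max_injOn_parts (c : OrderedFinpartition n) {m m' : Fin c.length}
    (h : (partc c m).max = (partc c m').max) : m = m' :=
  (strictMono_partc_max c).injective h

lemma toFP_injective' (c c' : OrderedFinpartition n)
    (hl : c.length = c'.length)
    (hparts : Finset.image (partc c) univ = Finset.image (partc c') univ) :
    ∀ m : Fin c.length, partc c m = partc c' (Fin.cast hl m) := by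
  have hψ : StrictMono (fun m : Fin c.length => (partc c' (Fin.cast hl m)).max) := by
    intro a b hab
    exact strictMono_partc_max c' hab
  have himg : Set.range (fun m => (partc c m).max)
      = Set.range (fun m : Fin c.length => (partc c' (Fin.cast hl m)).max) := by
    have h1 : Set.range (fun m => (partc c m).max)
        = Finset.max '' ↑(Finset.image (partc c) univ) := by
      rw [coe_image, coe_univ, Set.image_univ, ← Set.range_comp]; rfl
    have h2 : Set.range (fun m : Fin c.length => (partc c' (Fin.cast hl m)).max)
        = Finset.max '' ↑(Finset.image (partc c') univ) := by
      rw [coe_image, coe_univ, Set.image_univ, ← Set.range_comp]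
      exact (finCongr hl).surjective.range_comp (Finset.max ∘ partc c')
    rw [h1, h2, hparts]
  have hmaxeq := strictMono_eq_of_range_eq (strictMono_partc_max c) hψ himg
  intro m
  have hmem : partc c m ∈ Finset.image (partc c') univ := by
    rw [← hparts]; exact mem_image_of_mem _ (mem_univ m)
  obtain ⟨m'', _, hm''⟩ := Finset.mem_image.1 hmem
  have : (partc c' m'').max = (partc c' (Fin.cast hl m)).max := by
    rw [hm'']; exact congrFun hmaxeq m
  rw [max_injOn_parts c' this] at hm''
  exact hm''.symm

lemma toFP_injective_aux : ∀ (c c' : OrderedFinpartition n),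
    Finset.image (partc c) univ = Finset.image (partc c') univ → c = c' := by
  rintro ⟨l, sz, szpos, emb, embsm, psm, dj, cov⟩ ⟨l', sz', szpos', emb', embsm', psm', dj', cov'⟩
    hparts
  have hl : l = l' := by
    have := congrArg Finset.card hparts
    rwa [card_image_of_injective _ (partc_injective ⟨l, sz, szpos, emb, embsm, psm, dj, cov⟩),
      card_image_of_injective _ (partc_injective ⟨l', sz', szpos', emb', embsm', psm', dj', cov'⟩),
      card_univ, card_univ, Fintype.card_fin, Fintype.card_fin] at this
  subst hl
  have hpart := toFP_injective' ⟨l, sz, szpos, emb, embsm, psm, dj, cov⟩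
    ⟨l, sz', szpos', emb', embsm', psm', dj', cov'⟩ rfl hparts
  simp only [Fin.cast_refl, id] at hpart
  have hsz : sz = sz' := by
    funext m
    have := congrArg Finset.card (hpart m)
    rwa [partc_card, partc_card] at this
  subst hsz
  have hemb : emb = emb' := by
    funext m
    apply strictMono_eq_of_range_eq (embsm m) (embsm' m)
    rw [← coe_partc ⟨l, sz, szpos, emb, embsm, psm, dj, cov⟩ m,
      ← coe_partc ⟨l, sz, szpos', emb', embsm', psm', dj', cov'⟩ m, hpart m]
  subst hemb
  rfl

lemma toFP_injective : Injective (toFP (n := n)) := by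
  intro c c' h
  exact toFP_injective_aux c c' (congrArg Finpartition.parts h)

/-! ### Surjectivity of `toFP` -/

lemma image_univ_orderEmbOfFin {β : Type*} [LinearOrder β] (s : Finset β) {k : ℕ}
    (h : s.card = k) : Finset.image (s.orderEmbOfFin h) univ = s := by
  ext j
  simp only [mem_image, mem_univ, true_and]
  constructor
  · rintro ⟨i, rfl⟩; exact Finset.orderEmbOfFin_mem s h i
  · intro hj
    have : j ∈ Set.range (s.orderEmbOfFin h) := by
      rw [Finset.range_orderEmbOfFin]; exact hj
    obtain ⟨i, hi⟩ := this
    exact ⟨i, hi⟩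

variable (P : Finpartition (univ : Finset (Fin n)))

/-- The set of block maxima. -/
def maxSet : Finset (Fin n) :=
  univ.filter (fun j => ∀ i ∈ P.part j, i ≤ j)

lemma mem_maxSet {j : Fin n} : j ∈ maxSet P ↔ ∀ i ∈ P.part j, i ≤ j := by
  simp [maxSet]

lemma maxSet_part_inj {j j' : Fin n} (hj : j ∈ maxSet P) (hj' : j' ∈ maxSet P)
    (h : P.part j = P.part j') : j = j' := by
  have h1 : j ≤ j' := (mem_maxSet P).1 hj' j (h ▸ P.mem_part (mem_univ j))
  have h2 : j' ≤ j := (mem_maxSet P).1 hj j' (h.symm ▸ P.mem_part (mem_univ j'))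
  exact le_antisymm h1 h2

lemma part_maxSet_surj {B : Finset (Fin n)} (hB : B ∈ P.parts) :
    ∃ j ∈ maxSet P, P.part j = B := by
  have hne : B.Nonempty := P.nonempty_of_mem_parts hB
  refine ⟨B.max' hne, ?_, P.part_eq_of_mem hB (B.max'_mem hne)⟩
  rw [mem_maxSet, P.part_eq_of_mem hB (B.max'_mem hne)]
  exact fun i hi => Finset.le_max' B i hi

lemma maxSet_card : (maxSet P).card = P.parts.card := by
  apply Finset.card_nbij (fun j => P.part j)
  · intro j _; exact P.part_mem.2 (mem_univ j)
  · intro j hj j' hj' h; exact maxSet_part_inj P hj hj' h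
  · intro B hB
    obtain ⟨j, hj, hjB⟩ := part_maxSet_surj P hB
    exact ⟨j, hj, hjB⟩

/-- The enumeration of block maxima in increasing order. -/
noncomputable def maxEmb : Fin P.parts.card ↪o Fin n :=
  (maxSet P).orderEmbOfFin (maxSet_card P)

lemma maxEmb_mem (m : Fin P.parts.card) : maxEmb P m ∈ maxSet P :=
  Finset.orderEmbOfFin_mem _ _ m

lemma part_maxEmb_max' (m : Fin P.parts.card)
    (hne : (P.part (maxEmb P m)).Nonempty) :
    (P.part (maxEmb P m)).max' hne = maxEmb P m := by
  apply le_antisymm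
  · exact Finset.max'_le _ _ _ ((mem_maxSet P).1 (maxEmb_mem P m))
  · exact Finset.le_max' _ _ (P.mem_part (mem_univ _))

lemma part_maxEmb_injective : Injective (fun m => P.part (maxEmb P m)) := by
  intro m m' h
  exact (maxEmb P).injective (maxSet_part_inj P (maxEmb_mem P m) (maxEmb_mem P m') h)

lemma image_part_maxEmb : Finset.image (fun m => P.part (maxEmb P m)) univ = P.parts := by
  apply Finset.eq_of_subset_of_card_le
  · intro B hB
    obtain ⟨m, _, rfl⟩ := Finset.mem_image.1 hB
    exact P.part_mem.2 (mem_univ _)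
  · rw [card_image_of_injective _ (part_maxEmb_injective P), card_univ, Fintype.card_fin]

/-- Build an ordered finpartition from a finpartition of `univ : Finset (Fin n)`. -/
noncomputable def ofFP : OrderedFinpartition n where
  length := P.parts.card
  partSize m := (P.part (maxEmb P m)).card
  partSize_pos m := Finset.card_pos.2 (P.nonempty_of_mem_parts (P.part_mem.2 (mem_univ _)))
  emb m := (P.part (maxEmb P m)).orderEmbOfFin rfl
  emb_strictMono m := ((P.part (maxEmb P m)).orderEmbOfFin rfl).strictMono
  parts_strictMono := by
    intro a b hab
    have ha := Finset.orderEmbOfFin_last (s := P.part (maxEmb P a)) rfl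
      (Finset.card_pos.2 (P.nonempty_of_mem_parts (P.part_mem.2 (mem_univ _))))
    have hb := Finset.orderEmbOfFin_last (s := P.part (maxEmb P b)) rfl
      (Finset.card_pos.2 (P.nonempty_of_mem_parts (P.part_mem.2 (mem_univ _))))
    show ((P.part (maxEmb P a)).orderEmbOfFin rfl) _ < ((P.part (maxEmb P b)).orderEmbOfFin rfl) _
    rw [ha, hb, part_maxEmb_max', part_maxEmb_max']
    exact (maxEmb P).strictMono hab
  disjoint := by
    intro a _ b _ hab
    have hparts : P.part (maxEmb P a) ≠ P.part (maxEmb P b) :=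
      fun h => hab (part_maxEmb_injective P h)
    have hd : Disjoint (P.part (maxEmb P a)) (P.part (maxEmb P b)) :=
      P.disjoint (P.part_mem.2 (mem_univ _)) (P.part_mem.2 (mem_univ _)) hparts
    show Disjoint (Set.range ((P.part (maxEmb P a)).orderEmbOfFin rfl))
      (Set.range ((P.part (maxEmb P b)).orderEmbOfFin rfl))
    rw [Finset.range_orderEmbOfFin, Finset.range_orderEmbOfFin]
    exact_mod_cast hd
  cover := by
    intro j
    have hj : P.part j ∈ P.parts := P.part_mem.2 (mem_univ j)
    have : P.part j ∈ Finset.image (fun m => P.part (maxEmb P m)) univ := by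
      rw [image_part_maxEmb]; exact hj
    obtain ⟨m, _, hm⟩ := Finset.mem_image.1 this
    refine ⟨m, ?_⟩
    show j ∈ Set.range ((P.part (maxEmb P m)).orderEmbOfFin rfl)
    rw [Finset.range_orderEmbOfFin, hm]
    exact_mod_cast P.mem_part (mem_univ j)

lemma toFP_ofFP : toFP (ofFP P) = P := by
  apply Finpartition.ext
  show Finset.image (partc (ofFP P)) univ = P.parts
  have hpartc : ∀ m, partc (ofFP P) m = P.part (maxEmb P m) := by
    intro m
    ext j
    simp only [partc, mem_image, mem_univ, true_and]
    constructor
    · rintro ⟨i, rfl⟩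
      exact Finset.orderEmbOfFin_mem _ rfl i
    · intro hj
      have hr : j ∈ Set.range ((P.part (maxEmb P m)).orderEmbOfFin rfl) := by
        rw [Finset.range_orderEmbOfFin]; exact hj
      exact hr
  rw [show partc (ofFP P) = fun m => P.part (maxEmb P m) from funext hpartc]
  exact image_part_maxEmb P

lemma toFP_bijective : Function.Bijective (toFP (n := n)) :=
  ⟨toFP_injective, fun P => ⟨ofFP P, toFP_ofFP P⟩⟩

end FaaDiBrunoBridge

/-- Faà di Bruno formula via set partitions: if `f : J → ℝ` and `g : I → J` are `n`-times
continuously differentiable on open sets `I, J ⊆ ℝ`, then for `x ∈ I`,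
`(f ∘ g)^{(n)}(x) = ∑_{P ∈ 𝒫_n} f^{(|P|)}(g x) ∏_{B ∈ P} g^{(|B|)}(x)`,
where `𝒫_n` is the set of partitions of `{1,…,n}`. -/
theorem faa_di_bruno (n : ℕ) (I J : Set ℝ) (hI : IsOpen I) (hJ : IsOpen J)
    (f g : ℝ → ℝ) (hf : ContDiffOn ℝ n f J) (hg : ContDiffOn ℝ n g I)
    (hmaps : Set.MapsTo g I J) (x : ℝ) (hx : x ∈ I) :
    iteratedDerivWithin n (f ∘ g) I x
      = ∑ P : Finpartition (Finset.univ : Finset (Fin n)),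
          iteratedDerivWithin P.parts.card f J (g x)
            * ∏ B ∈ P.parts, iteratedDerivWithin B.card g I x := by
  classical
  have hq : HasFTaylorSeriesUpToOn n f (ftaylorSeriesWithin ℝ f J) J :=
    hf.ftaylorSeriesWithin hJ.uniqueDiffOn
  have hp : HasFTaylorSeriesUpToOn n g (ftaylorSeriesWithin ℝ g I) I :=
    hg.ftaylorSeriesWithin hI.uniqueDiffOn
  have H := hq.comp hp hmaps
  have key : ((ftaylorSeriesWithin ℝ f J (g x)).taylorComp (ftaylorSeriesWithin ℝ g I x)) n
      = iteratedFDerivWithin ℝ n (f ∘ g) I x :=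
    H.eq_iteratedFDerivWithin_of_uniqueDiffOn le_rfl hI.uniqueDiffOn hx
  rw [iteratedDerivWithin_eq_iteratedFDerivWithin, ← key]
  rw [FormalMultilinearSeries.taylorComp, ContinuousMultilinearMap.sum_apply]
  refine Fintype.sum_bijective _ FaaDiBrunoBridge.toFP_bijective _ _ (fun c => ?_)
  rw [FaaDiBrunoBridge.toFP_parts_card,
    FaaDiBrunoBridge.toFP_prod c (fun k => iteratedDerivWithin k g I x)]
  rw [FormalMultilinearSeries.compAlongOrderedFinpartition_apply]
  have happ : c.applyOrderedFinpartition
      (fun m => ftaylorSeriesWithin ℝ g I x (c.partSize m)) (fun _ => (1:ℝ))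
      = fun m => iteratedDerivWithin (c.partSize m) g I x := by
    rw [c.applyOrderedFinpartition_apply]
    funext m
    show iteratedFDerivWithin ℝ (c.partSize m) g I x ((fun _ => (1:ℝ)) ∘ c.emb m) = _
    rw [iteratedDerivWithin_eq_iteratedFDerivWithin]
    rfl
  rw [happ]
  have : (fun m => iteratedDerivWithin (c.partSize m) g I x)
      = fun m => (iteratedDerivWithin (c.partSize m) g I x) • (1:ℝ) := by
    funext m; rw [smul_eq_mul, mul_one]
  rw [this, ContinuousMultilinearMap.map_smul_univ]
  show (∏ m, iteratedDerivWithin (c.partSize m) g I x)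
      • iteratedFDerivWithin ℝ c.length f J (g x) (fun _ => (1:ℝ)) = _
  rw [← iteratedDerivWithin_eq_iteratedFDerivWithin, smul_eq_mul, mul_comm]
  simp [smul_eq_mul]
end
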